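/- Let A be an invertible N×N real matrix such that its transpose Aᵀ is a B-matrix. Then every component of the vector A⁻¹·1, where 1 is the all-ones vector, is nonnegative. -/

import Mathlib

open Matrix Finset

/-- A real square matrix is a *B-matrix* if every row sum is positive and every off-diagonal
entry is strictly smaller than the corresponding row mean. -/
def IsBMatrix {N : ℕ} (A : Matrix (Fin N) (Fin N) ℝ) : Prop :=
  ∀ i, 0 < ∑ k, A i k ∧ ∀ j, j ≠ i → A i j < (∑ k, A i k) / (N : ℝ)

/-- If `A` is invertible and `Aᵀ` is a B-matrix, then `A⁻¹ 1 ≥ 0`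
componentwise, where `1` is the all-ones vector. -/
theorem stmt8 (N : ℕ) (A : Matrix (Fin N) (Fin N) ℝ)
    (hA : IsUnit A.det) (hB : IsBMatrix Aᵀ) :
    ∀ i, 0 ≤ A⁻¹.mulVec (1 : Fin N → ℝ) i := by
  intro i
  by_contra hneg
  push_neg at hneg
  have hN : 0 < N := i.pos
  set x : Fin N → ℝ := A⁻¹.mulVec 1 with hx
  have hAx : A.mulVec x = 1 := by
    rw [hx, Matrix.mulVec_mulVec, Matrix.mul_nonsing_inv A hA, Matrix.one_mulVec]
  have heq : ∀ k, ∑ j, A k j * x j = 1 := by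
    intro k
    have := congrFun hAx k
    simpa [Matrix.mulVec, dotProduct] using this
  set r : Fin N → ℝ := fun j => ∑ k, A k j with hr
  have hrpos : ∀ j, 0 < r j := fun j => by
    simpa [Matrix.transpose_apply] using (hB j).1
  have hoff : ∀ j k, k ≠ j → A k j < r j / N := fun j k hk => by
    simpa [Matrix.transpose_apply] using (hB j).2 k hk
  have hsum : ∑ j, x j * r j = N := by
    calc ∑ j, x j * r j = ∑ j, ∑ k, A k j * x j := by
          refine Finset.sum_congr rfl fun j _ => ?_
          rw [Finset.mul_sum]
          exact Finset.sum_congr rfl fun k _ => mul_comm _ _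
      _ = ∑ k, ∑ j, A k j * x j := Finset.sum_comm
      _ = N := by simp [heq]
  set d : Fin N → Fin N → ℝ := fun j k => A k j - r j / N with hd
  have hdrow : ∀ j, ∑ k, d j k = 0 := by
    intro j
    have : ∑ k, d j k = r j - N * (r j / N) := by
      simp [hd, Finset.sum_sub_distrib, hr, Finset.card_univ, mul_comm]
    rw [this]
    field_simp
    ring
  have hkey : ∀ k, ∑ j, x j * d j k = 0 := by
    intro k
    have h1 : ∑ j, x j * A k j = 1 := by
      rw [← heq k]
      exact Finset.sum_congr rfl fun j _ => mul_comm _ _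
    have h2 : ∑ j, x j * (r j / N) = 1 := by
      have : ∑ j, x j * (r j / N) = (∑ j, x j * r j) / N := by
        rw [Finset.sum_div]
        exact Finset.sum_congr rfl fun j _ => (mul_div_assoc _ _ _).symm
      rw [this, hsum]
      field_simp
    simp only [hd, mul_sub, Finset.sum_sub_distrib, h1, h2, sub_self]
  set Neg : Finset (Fin N) := Finset.univ.filter (fun j => x j < 0) with hNeg
  have hiNeg : i ∈ Neg := by simp [hNeg, hneg]
  have hNegne : Neg.Nonempty := ⟨i, hiNeg⟩
  have hS : ∑ j, x j * ∑ k ∈ Neg, d j k = 0 := by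
    calc ∑ j, x j * ∑ k ∈ Neg, d j k = ∑ j, ∑ k ∈ Neg, x j * d j k := by
          exact Finset.sum_congr rfl fun j _ => Finset.mul_sum _ _ _
      _ = ∑ k ∈ Neg, ∑ j, x j * d j k := Finset.sum_comm
      _ = 0 := by simp [hkey]
  by_cases hP : (Finset.univ \ Neg).Nonempty
  · -- main case: terms are ≤ 0, term i < 0
    have hterm : ∀ j, x j * ∑ k ∈ Neg, d j k ≤ 0 := by
      intro j
      by_cases hj : x j < 0
      · -- j ∈ Neg : the inner sum is positive
        have hjNeg : j ∈ Neg := by simp [hNeg, hj]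
        have hsplit : ∑ k ∈ Neg, d j k = - ∑ k ∈ Finset.univ \ Neg, d j k := by
          have := Finset.sum_sdiff (Finset.subset_univ Neg) (f := d j)
          -- ∑ (univ \ Neg) + ∑ Neg = ∑ univ = 0
          rw [hdrow j] at this
          linarith [this]
        have hpos : 0 < ∑ k ∈ Neg, d j k := by
          rw [hsplit]
          have : ∑ k ∈ Finset.univ \ Neg, d j k < 0 := by
            apply Finset.sum_neg
            · intro k hk
              have hkx : ¬ x k < 0 := by
                simp only [hNeg, Finset.mem_sdiff, Finset.mem_filter, Finset.mem_univ,
                  true_and] at hk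
                exact hk
              have hkj : k ≠ j := fun h => hkx (h ▸ hj)
              have := hoff j k hkj
              simp only [hd]
              linarith
            · exact hP
          linarith
        nlinarith
      · -- x j ≥ 0 : inner sum is negative
        push_neg at hj
        have hinner : ∑ k ∈ Neg, d j k < 0 := by
          apply Finset.sum_neg
          · intro k hk
            have hkx : x k < 0 := by
              simp only [hNeg, Finset.mem_filter, Finset.mem_univ, true_and] at hk
              exact hk
            have hkj : k ≠ j := fun h => absurd (h ▸ hkx) (not_lt.mpr hj)
            have := hoff j k hkj
            simp only [hd]
            linarith
          · exact hNegne
        nlinarith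
    have hi : x i * ∑ k ∈ Neg, d i k < 0 := by
      have hsplit : ∑ k ∈ Neg, d i k = - ∑ k ∈ Finset.univ \ Neg, d i k := by
        have := Finset.sum_sdiff (Finset.subset_univ Neg) (f := d i)
        rw [hdrow i] at this
        linarith [this]
      have hposi : 0 < ∑ k ∈ Neg, d i k := by
        rw [hsplit]
        have : ∑ k ∈ Finset.univ \ Neg, d i k < 0 := by
          apply Finset.sum_neg
          · intro k hk
            have hkx : ¬ x k < 0 := by
              simp only [hNeg, Finset.mem_sdiff, Finset.mem_filter, Finset.mem_univ,
                true_and] at hk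
              exact hk
            have hkj : k ≠ i := fun h => hkx (h ▸ hneg)
            have := hoff i k hkj
            simp only [hd]
            linarith
          · exact hP
        linarith
      nlinarith
    have : ∑ j, x j * ∑ k ∈ Neg, d j k < 0 := by
      calc ∑ j, x j * ∑ k ∈ Neg, d j k < ∑ _j : Fin N, (0 : ℝ) :=
            Finset.sum_lt_sum (fun j _ => hterm j) ⟨i, Finset.mem_univ i, hi⟩
        _ = 0 := by simp
    linarith [hS]
  · -- Neg = univ : all x j < 0, contradicting ∑ x j * r j = N > 0
    have hall : ∀ j : Fin N, x j < 0 := by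
      intro j
      by_contra hj
      exact hP ⟨j, by simp [hNeg, hj]⟩
    have : ∑ j, x j * r j < 0 := by
      apply Finset.sum_neg
      · intro j _
        exact mul_neg_of_neg_of_pos (hall j) (hrpos j)
      · exact ⟨i, Finset.mem_univ i⟩
    rw [hsum] at this
    have hN' : (0:ℝ) < N := by exact_mod_cast hN
    linarith
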